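/- Let u_1, …, u_N ∈ [−S, S]² × [0, T] be events with pairwise distinct coordinates in each component, let g : ℝ³ → ℝ be bounded and differentiable with M-Lipschitz gradient, and let μ, α ≥ 0. Define the intensity λ(u) = μ + α Σ_{m=1}^N g(u − u_m) and the continuous ℓ₂ loss L = ∫_{[−S,S]²×[0,T]} λ(u)² du − 2 Σ_{n=1}^N λ(u_n). For grid stepsizes Δ = (Δ_X, Δ_Y, Δ_T) with 2S/Δ_X, 2S/Δ_Y and T/Δ_T positive integers G_X, G_Y, G_T, let ũ_n = u_n + δ_n denote the projection of u_n onto the grid {(−S + v_xΔ_X, −S + v_yΔ_Y, v_tΔ_T) : 0 ≤ v_x ≤ G_X, 0 ≤ v_y ≤ G_Y, 0 ≤ v_t ≤ G_T} (each component of δ_n bounded in absolute value by the corresponding half-stepsize), define the discretized intensity at a grid point p by λ̃(p) = μ + α Σ_m g(p − ũ_m), and the discretized loss L_G = Δ_XΔ_YΔ_T Σ_{grid points p} λ̃(p)² − 2 Σ_{n=1}^N λ̃(ũ_n). Then there exist constants C₁, C₂ ≥ 0, depending only on μ, α, g, M, S, T, N and the events (not on Δ), such that for every such grid satisfying Assumption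 1 (Δ_X < min_{n≠m}|x_n − x_m|, Δ_Y < min_{n≠m}|y_n − y_m|, Δ_T < min_{n≠m}|t_n − t_m|) and with max(Δ_X, Δ_Y, Δ_T) ≤ 1: L_G ≤ L + C₁‖Δ‖₂ + 2α Σ_{n=1}^N Σ_{m=1}^N ⟨δ_m − δ_n, ∇g(u_n − u_m)⟩ + C₂‖Δ‖₂². -/

import Mathlib

open scoped RealInnerProductSpace
open MeasureTheory Set

section Aux

variable {F : Type*} [NormedAddCommGroup F] [InnerProductSpace ℝ F] [CompleteSpace F]

private lemma taylor_bound' (g : F → ℝ) (hg : Differentiable ℝ g) (M : ℝ) (hM : 0 ≤ M)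
    (hlip : ∀ a b : F, ‖gradient g a - gradient g b‖ ≤ M * ‖a - b‖) (w h : F) :
    |g (w + h) - g w - ⟪gradient g w, h⟫| ≤ M * ‖h‖ ^ 2 := by
  have hgradcont : Continuous (gradient g) := by
    have : LipschitzWith M.toNNReal (gradient g) := by
      apply LipschitzWith.of_dist_le_mul
      intro a b
      rw [dist_eq_norm, dist_eq_norm]
      simpa [Real.coe_toNNReal M hM] using hlip a b
    exact this.continuous
  have hderiv : ∀ t : ℝ, HasDerivAt (fun t : ℝ => g (w + t • h))
      (⟪gradient g (w + t • h), h⟫) t := by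
    intro t
    have h1 : HasDerivAt (fun t : ℝ => w + t • h) h t := by
      simpa using ((hasDerivAt_id t).smul_const h).const_add w
    have h2 : HasFDerivAt g (InnerProductSpace.toDual ℝ F (gradient g (w + t • h))) (w + t • h) :=
      (hg (w + t • h)).hasGradientAt.hasFDerivAt
    have := h2.comp_hasDerivAt t h1
    simpa [InnerProductSpace.toDual_apply_apply, Function.comp_def] using this
  have hcont : Continuous (fun t : ℝ => ⟪gradient g (w + t • h), h⟫) := by
    exact (hgradcont.comp (by continuity)).inner continuous_const
  have hFTC : ∫ t in (0:ℝ)..1, ⟪gradient g (w + t • h), h⟫ =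
      g (w + h) - g w := by
    have := intervalIntegral.integral_eq_sub_of_hasDerivAt
      (f := fun t : ℝ => g (w + t • h))
      (f' := fun t : ℝ => ⟪gradient g (w + t • h), h⟫)
      (a := 0) (b := 1) (fun t _ => hderiv t) (hcont.intervalIntegrable 0 1)
    simpa using this
  have hconst : ∫ t in (0:ℝ)..1, ⟪gradient g w, h⟫ = ⟪gradient g w, h⟫ := by simp
  have key : g (w + h) - g w - ⟪gradient g w, h⟫ =
      ∫ t in (0:ℝ)..1, (⟪gradient g (w + t • h), h⟫ - ⟪gradient g w, h⟫) := by
    rw [intervalIntegral.integral_sub (hcont.intervalIntegrable 0 1)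
      (intervalIntegrable_const), hFTC, hconst]
  rw [key]
  have hb : ∀ t ∈ Set.uIoc (0:ℝ) 1,
      ‖⟪gradient g (w + t • h), h⟫ - ⟪gradient g w, h⟫‖ ≤ M * ‖h‖ ^ 2 := by
    intro t ht
    rw [← inner_sub_left]
    calc ‖⟪gradient g (w + t • h) - gradient g w, h⟫‖
        ≤ ‖gradient g (w + t • h) - gradient g w‖ * ‖h‖ := by
          exact norm_inner_le_norm (𝕜 := ℝ) _ _
      _ ≤ M * ‖t • h‖ * ‖h‖ := by
          have := hlip (w + t • h) w
          simp only [add_sub_cancel_left] at this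
          exact mul_le_mul_of_nonneg_right this (norm_nonneg h)
      _ ≤ M * ‖h‖ ^ 2 := by
          rw [norm_smul]
          have ht1 : ‖t‖ ≤ 1 := by
            rw [Set.uIoc_of_le (by norm_num : (0:ℝ) ≤ 1)] at ht
            rw [Real.norm_eq_abs, abs_le]; constructor <;> [linarith [ht.1]; linarith [ht.2]]
          have h2 : ‖t‖ * ‖h‖ ≤ 1 * ‖h‖ := mul_le_mul_of_nonneg_right ht1 (norm_nonneg h)
          nlinarith [mul_le_mul_of_nonneg_left h2 (mul_nonneg hM (norm_nonneg h))]
  calc |∫ t in (0:ℝ)..1, (⟪gradient g (w + t • h), h⟫ - ⟪gradient g w, h⟫)|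
      ≤ M * ‖h‖ ^ 2 * |1 - 0| := by
        rw [← Real.norm_eq_abs]
        exact intervalIntegral.norm_integral_le_of_norm_le_const hb
    _ = M * ‖h‖ ^ 2 := by norm_num

private lemma grad_norm_le' (g : F → ℝ) (B : ℝ) (hgbdd : ∀ p, |g p| ≤ B)
    (hg : Differentiable ℝ g) (M' : ℝ) (hM' : 0 < M')
    (hlip : ∀ a b : F, ‖gradient g a - gradient g b‖ ≤ M' * ‖a - b‖) (a : F) :
    ‖gradient g a‖ ≤ Real.sqrt (8 * M' * B) := by
  set v := gradient g a with hv
  have ht := taylor_bound' g hg M' hM'.le hlip a ((1 / (2 * M')) • v)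
  have hinner : ⟪v, (1 / (2 * M')) • v⟫ = (1 / (2 * M')) * ‖v‖ ^ 2 := by
    rw [real_inner_smul_right, real_inner_self_eq_norm_sq]
  have hnorm : ‖(1 / (2 * M')) • v‖ ^ 2 = (1 / (2 * M')) ^ 2 * ‖v‖ ^ 2 := by
    rw [norm_smul, mul_pow, Real.norm_eq_abs, sq_abs]
  rw [hinner, hnorm] at ht
  have h1 := (abs_le.mp ht).1
  have h2 := hgbdd (a + (1 / (2 * M')) • v)
  have h3 := hgbdd a
  have hB : 0 ≤ B := (abs_nonneg _).trans (hgbdd a)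
  have hv2 : ‖v‖ ^ 2 ≤ 8 * M' * B := by
    have e1 := (abs_le.mp h2).1
    have e2 := (abs_le.mp h2).2
    have e3 := (abs_le.mp h3).1
    have e4 := (abs_le.mp h3).2
    have hM'ne : M' ≠ 0 := ne_of_gt hM'
    have key : (1 / (2 * M')) * ‖v‖ ^ 2 - M' * ((1 / (2 * M')) ^ 2 * ‖v‖ ^ 2) =
        ‖v‖ ^ 2 / (4 * M') := by field_simp; ring
    have hd : ‖v‖ ^ 2 / (4 * M') ≤ 2 * B := by linarith
    have := (div_le_iff₀ (by positivity : (0:ℝ) < 4 * M')).mp hd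
    calc ‖v‖ ^ 2 ≤ 2 * B * (4 * M') := this
      _ = 8 * M' * B := by ring
  calc ‖v‖ = Real.sqrt (‖v‖ ^ 2) := (Real.sqrt_sq (norm_nonneg v)).symm
    _ ≤ Real.sqrt (8 * M' * B) := Real.sqrt_le_sqrt hv2

private lemma g_lip' (g : F → ℝ) (hg : Differentiable ℝ g) (C : ℝ)
    (hC : ∀ a : F, ‖gradient g a‖ ≤ C) (a b : F) : |g a - g b| ≤ C * ‖a - b‖ := by
  have hfd : ∀ x : F, ‖fderiv ℝ g x‖ ≤ C := by
    intro x
    have h1 : fderiv ℝ g x = InnerProductSpace.toDual ℝ F (gradient g x) :=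
      ((hg x).hasGradientAt.hasFDerivAt).fderiv
    rw [h1]
    calc ‖(InnerProductSpace.toDual ℝ F) (gradient g x)‖ = ‖gradient g x‖ :=
        (InnerProductSpace.toDual ℝ F).norm_map _
      _ ≤ C := hC x
  have := Convex.norm_image_sub_le_of_norm_fderiv_le
    (f := g) (fun x _ => hg x) (fun x _ => hfd x) convex_univ
    (Set.mem_univ b) (Set.mem_univ a)
  simpa [Real.norm_eq_abs] using this

private lemma aux_sq_le {a b c L : ℝ} (h : |a - b| ≤ c) (ha : |a| ≤ L) (hb : |b| ≤ L) :
    a ^ 2 ≤ b ^ 2 + 2 * L * c := by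
  have h1 := abs_le.mp h
  have h2 := abs_le.mp ha
  have h3 := abs_le.mp hb
  nlinarith [h1.1, h1.2, h2.1, h2.2, h3.1, h3.2]

private lemma norm3_le (x : EuclideanSpace ℝ (Fin 3)) {a b c y : ℝ}
    (h0 : |x 0| ≤ a) (h1 : |x 1| ≤ b) (h2 : |x 2| ≤ c) (hy : 0 ≤ y)
    (hsq : a ^ 2 + b ^ 2 + c ^ 2 ≤ y ^ 2) : ‖x‖ ≤ y := by
  have he : ‖x‖ = Real.sqrt (∑ i, ‖x i‖ ^ 2) := EuclideanSpace.norm_eq x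
  have hs : (∑ i, ‖x i‖ ^ 2) = |x 0| ^ 2 + |x 1| ^ 2 + |x 2| ^ 2 := by
    simp [Fin.sum_univ_three, Real.norm_eq_abs]
  rw [he, hs]
  calc Real.sqrt (|x 0| ^ 2 + |x 1| ^ 2 + |x 2| ^ 2) ≤ Real.sqrt (y ^ 2) := by
        apply Real.sqrt_le_sqrt
        nlinarith [abs_nonneg (x 0), abs_nonneg (x 1), abs_nonneg (x 2), h0, h1, h2]
    _ = y := Real.sqrt_sq hy

private lemma cell_eq_preimage (a b c da db dc : ℝ) :
    {p : EuclideanSpace ℝ (Fin 3) | p 0 ∈ Set.Ico a (a + da) ∧ p 1 ∈ Set.Ico b (b + db) ∧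
        p 2 ∈ Set.Ico c (c + dc)} =
      (MeasurableEquiv.toLp 2 (Fin 3 → ℝ)).symm ⁻¹'
        (Set.univ.pi ![Set.Ico a (a + da), Set.Ico b (b + db), Set.Ico c (c + dc)]) := by
  ext p
  simp only [Set.mem_setOf_eq, Set.mem_preimage, Set.mem_univ_pi]
  constructor
  · rintro ⟨h0, h1, h2⟩ i
    fin_cases i <;> simpa using (by first | exact h0 | exact h1 | exact h2)
  · intro h
    exact ⟨h 0, h 1, h 2⟩

private lemma cell_measurable (a b c da db dc : ℝ) :
    MeasurableSet {p : EuclideanSpace ℝ (Fin 3) | p 0 ∈ Set.Ico a (a + da) ∧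
        p 1 ∈ Set.Ico b (b + db) ∧ p 2 ∈ Set.Ico c (c + dc)} := by
  rw [cell_eq_preimage]
  apply MeasurableSet.preimage
  · apply MeasurableSet.univ_pi
    intro i
    fin_cases i <;> simp [measurableSet_Ico]
  · exact (MeasurableEquiv.toLp 2 (Fin 3 → ℝ)).symm.measurable

private lemma cell_volume (a b c da db dc : ℝ) :
    volume {p : EuclideanSpace ℝ (Fin 3) | p 0 ∈ Set.Ico a (a + da) ∧
        p 1 ∈ Set.Ico b (b + db) ∧ p 2 ∈ Set.Ico c (c + dc)} =
      ENNReal.ofReal da * ENNReal.ofReal db * ENNReal.ofReal dc := by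
  rw [cell_eq_preimage]
  rw [MeasurePreserving.measure_preimage (EuclideanSpace.volume_preserving_symm_measurableEquiv_toLp (Fin 3))]
  · rw [volume_pi_pi]
    rw [Fin.prod_univ_three]
    simp [Real.volume_Ico, mul_assoc]
  · apply MeasurableSet.nullMeasurableSet
    apply MeasurableSet.univ_pi
    intro i
    fin_cases i <;> simp [measurableSet_Ico]

private lemma disjoint_Ico_of_step {a b Δ : ℝ} (h : a + Δ ≤ b ∨ b + Δ ≤ a) :
    Disjoint (Set.Ico a (a + Δ)) (Set.Ico b (b + Δ)) := by
  rw [Set.disjoint_left]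
  rintro x ⟨h1, h2⟩ ⟨h3, h4⟩
  rcases h with h | h <;> linarith

private lemma Ico_step_disjoint {i j : ℕ} {dd e : ℝ} (hdd : 0 < dd) (hij : i ≠ j) :
    Disjoint (Set.Ico (e + (i : ℝ) * dd) (e + (i : ℝ) * dd + dd))
      (Set.Ico (e + (j : ℝ) * dd) (e + (j : ℝ) * dd + dd)) := by
  apply disjoint_Ico_of_step
  rcases lt_or_gt_of_ne hij with h | h
  · left
    have : (i : ℝ) + 1 ≤ (j : ℝ) := by exact_mod_cast Nat.succ_le_of_lt h
    nlinarith
  · right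
    have : (j : ℝ) + 1 ≤ (i : ℝ) := by exact_mod_cast Nat.succ_le_of_lt h
    nlinarith

private lemma arith_upper {v G : ℕ} {Δ S p : ℝ} (hv : v < G) (hΔ : 0 < Δ)
    (hG : (G : ℝ) * Δ = 2 * S) (hp : p < -S + (v : ℝ) * Δ + Δ) : p ≤ S := by
  have h1 : ((v : ℝ) + 1) ≤ (G : ℝ) := by exact_mod_cast Nat.succ_le_of_lt hv
  nlinarith

private lemma arith_upperT {v G : ℕ} {Δ T p : ℝ} (hv : v < G) (hΔ : 0 < Δ)
    (hG : (G : ℝ) * Δ = T) (hp : p < (v : ℝ) * Δ + Δ) : p ≤ T := by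
  have h1 : ((v : ℝ) + 1) ≤ (G : ℝ) := by exact_mod_cast Nat.succ_le_of_lt hv
  nlinarith

private lemma sq_le_of_abs_le {a L : ℝ} (h : |a| ≤ L) : a ^ 2 ≤ L ^ 2 := by
  have h' := abs_le.mp h
  nlinarith [h'.1, h'.2]

private lemma vol_diff_le {S T ΔX ΔY ΔT : ℝ} (hS : 0 < S) (hT : 0 < T)
    (hΔX : 0 < ΔX) (hΔY : 0 < ΔY) (hΔT : 0 < ΔT)
    (hX1 : ΔX ≤ 1) (hY1 : ΔY ≤ 1) (hT1 : ΔT ≤ 1) :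
    (2 * S + ΔX) * (2 * S + ΔY) * (T + ΔT) - 2 * S * (2 * S) * T ≤
      (4 * S ^ 2 + 2 * S * (T + 1) + (T + 1)) * (ΔX + ΔY + ΔT) := by
  have hb1 : (0:ℝ) ≤ S ^ 2 * ΔX := by positivity
  have hb2 : (0:ℝ) ≤ S ^ 2 * ΔY := by positivity
  have hb3 : (0:ℝ) ≤ S * T * ΔT := mul_nonneg (mul_nonneg hS.le hT.le) hΔT.le
  have hb4 : (0:ℝ) ≤ S * ΔT := mul_nonneg hS.le hΔT.le
  have hb5 : (0:ℝ) ≤ S * ((ΔX + ΔY) * (1 - ΔT)) :=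
    mul_nonneg hS.le (mul_nonneg (by linarith) (by linarith))
  have hb6 : (0:ℝ) ≤ ΔX * T * (1 - ΔY) :=
    mul_nonneg (mul_nonneg hΔX.le hT.le) (by linarith)
  have hbc : ΔY * ΔT ≤ 1 := by nlinarith
  have hb7 : (0:ℝ) ≤ ΔX * (1 - ΔY * ΔT) := mul_nonneg hΔX.le (by linarith)
  have hb8 : (0:ℝ) ≤ (T + 1) * (ΔY + ΔT) := mul_nonneg (by linarith) (by linarith)
  linarith [hb1, hb2, hb3, hb4, hb5, hb6, hb7, hb8]

private lemma sum_shape (N : ℕ) (μ α : ℝ) (f : Fin N → Fin N → ℝ) :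
    -2 * ∑ n, (μ + α * ∑ m, f n m) = (N : ℝ) * (-2 * μ) + ∑ n, ∑ m, (-2 * (α * f n m)) := by
  simp only [mul_add, Finset.mul_sum, Finset.sum_add_distrib, Finset.sum_const,
    Finset.card_univ, Fintype.card_fin, nsmul_eq_mul]
  ring
section Main

set_option maxHeartbeats 1000000 in
open Finset in
theorem discretized_loss_perturbation_bound
    (S T : ℝ) (hS : 0 < S) (hT : 0 < T)
    (N : ℕ) (u : Fin N → EuclideanSpace ℝ (Fin 3))
    (hdom : ∀ n, u n 0 ∈ Set.Icc (-S) S ∧ u n 1 ∈ Set.Icc (-S) S ∧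
      u n 2 ∈ Set.Icc (0 : ℝ) T)
    (hdist : ∀ n m, n ≠ m → u n 0 ≠ u m 0 ∧ u n 1 ≠ u m 1 ∧ u n 2 ≠ u m 2)
    (g : EuclideanSpace ℝ (Fin 3) → ℝ) (M B : ℝ)
    (hgbdd : ∀ p, |g p| ≤ B)
    (hg : Differentiable ℝ g)
    (hlip : ∀ a b : EuclideanSpace ℝ (Fin 3),
      ‖gradient g a - gradient g b‖ ≤ M * ‖a - b‖)
    (μ α : ℝ) (hμ : 0 ≤ μ) (hα : 0 ≤ α) :
    ∃ C₁ C₂ : ℝ, 0 ≤ C₁ ∧ 0 ≤ C₂ ∧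
      ∀ (ΔX ΔY ΔT : ℝ) (GX GY GT : ℕ),
        0 < ΔX → 0 < ΔY → 0 < ΔT →
        0 < GX → 0 < GY → 0 < GT →
        (GX : ℝ) * ΔX = 2 * S → (GY : ℝ) * ΔY = 2 * S → (GT : ℝ) * ΔT = T →
        -- Assumption 1: no two events collapse on the same grid bin
        (∀ n m, n ≠ m → ΔX < |u n 0 - u m 0|) →
        (∀ n m, n ≠ m → ΔY < |u n 1 - u m 1|) →
        (∀ n m, n ≠ m → ΔT < |u n 2 - u m 2|) →
        max ΔX (max ΔY ΔT) ≤ 1 →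
        ∀ δ : Fin N → EuclideanSpace ℝ (Fin 3),
          -- each perturbation component is bounded by half the stepsize
          (∀ n, |δ n 0| ≤ ΔX / 2 ∧ |δ n 1| ≤ ΔY / 2 ∧ |δ n 2| ≤ ΔT / 2) →
          -- the projected event `uₙ + δₙ` is a grid point
          (∀ n, ∃ vx ≤ GX, ∃ vy ≤ GY, ∃ vt ≤ GT,
            u n + δ n = (EuclideanSpace.equiv (Fin 3) ℝ).symm
              ![-S + (vx : ℝ) * ΔX, -S + (vy : ℝ) * ΔY, (vt : ℝ) * ΔT]) →
          -- discretized ℓ₂ loss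
          ΔX * ΔY * ΔT *
              (∑ vx ∈ Finset.range (GX + 1), ∑ vy ∈ Finset.range (GY + 1),
                ∑ vt ∈ Finset.range (GT + 1),
                (μ + α * ∑ m, g ((EuclideanSpace.equiv (Fin 3) ℝ).symm
                  ![-S + (vx : ℝ) * ΔX, -S + (vy : ℝ) * ΔY, (vt : ℝ) * ΔT] -
                  (u m + δ m))) ^ 2) -
            2 * ∑ n, (μ + α * ∑ m, g ((u n + δ n) - (u m + δ m))) ≤
          -- continuous ℓ₂ loss
          ((∫ p in {p : EuclideanSpace ℝ (Fin 3) |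
              p 0 ∈ Set.Icc (-S) S ∧ p 1 ∈ Set.Icc (-S) S ∧ p 2 ∈ Set.Icc (0 : ℝ) T},
              (μ + α * ∑ m, g (p - u m)) ^ 2) -
            2 * ∑ n, (μ + α * ∑ m, g (u n - u m))) +
          C₁ * Real.sqrt (ΔX ^ 2 + ΔY ^ 2 + ΔT ^ 2) +
          2 * α * ∑ n, ∑ m, ⟪δ m - δ n, gradient g (u n - u m)⟫ +
          C₂ * (ΔX ^ 2 + ΔY ^ 2 + ΔT ^ 2) := by
  classical
  -- nonnegativity of `M` and `B`
  have hM : 0 ≤ M := by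
    have h := hlip 0 (EuclideanSpace.single 0 (1 : ℝ))
    have hn : ‖(0 : EuclideanSpace ℝ (Fin 3)) - EuclideanSpace.single 0 (1 : ℝ)‖ = 1 := by
      rw [zero_sub, norm_neg, EuclideanSpace.norm_single]; norm_num
    rw [hn, mul_one] at h
    exact le_trans (norm_nonneg _) h
  have hB : 0 ≤ B := (abs_nonneg _).trans (hgbdd 0)
  obtain ⟨M', hM'def⟩ : ∃ x : ℝ, x = M + 1 := ⟨_, rfl⟩
  have hM' : (0 : ℝ) < M' := by rw [hM'def]; linarith
  have hlip' : ∀ a b : EuclideanSpace ℝ (Fin 3),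
      ‖gradient g a - gradient g b‖ ≤ M' * ‖a - b‖ := by
    intro a b
    refine le_trans (hlip a b) ?_
    have := norm_nonneg (a - b)
    rw [hM'def]; nlinarith
  obtain ⟨Lg, hLgdef⟩ : ∃ x : ℝ, x = Real.sqrt (8 * M' * B) := ⟨_, rfl⟩
  have hLg0 : 0 ≤ Lg := hLgdef ▸ Real.sqrt_nonneg _
  have hgrad : ∀ a, ‖gradient g a‖ ≤ Lg := by
    intro a; rw [hLgdef]; exact grad_norm_le' g B hgbdd hg M' hM' hlip' a
  have hglip : ∀ a b, |g a - g b| ≤ Lg * ‖a - b‖ := g_lip' g hg Lg hgrad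
  obtain ⟨Λ, hΛdef⟩ : ∃ x : ℝ, x = μ + α * ((N : ℝ) * B) := ⟨_, rfl⟩
  have hΛ0 : 0 ≤ Λ := by
    rw [hΛdef]
    have : (0:ℝ) ≤ α * ((N : ℝ) * B) := mul_nonneg hα (mul_nonneg (Nat.cast_nonneg N) hB)
    linarith
  obtain ⟨Ll, hLldef⟩ : ∃ x : ℝ, x = α * (N : ℝ) * Lg := ⟨_, rfl⟩
  have hLl0 : 0 ≤ Ll := by
    rw [hLldef]
    exact mul_nonneg (mul_nonneg hα (Nat.cast_nonneg N)) hLg0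
  have hC1 : 0 ≤ 12 * S ^ 2 * T * Λ * Ll + 3 * Λ ^ 2 * (4 * S ^ 2 + 2 * S * (T + 1) + (T + 1)) := by
    have h1 : (0:ℝ) ≤ 12 * S ^ 2 * T * Λ * Ll := by
      refine mul_nonneg (mul_nonneg (mul_nonneg (by positivity) hT.le) hΛ0) hLl0
    have h2 : (0:ℝ) ≤ 3 * Λ ^ 2 * (4 * S ^ 2 + 2 * S * (T + 1) + (T + 1)) := by
      refine mul_nonneg (by positivity) ?_
      nlinarith [hS.le, hT.le, mul_nonneg hS.le hT.le, sq_nonneg S]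
    linarith
  have hC2 : 0 ≤ 2 * α * M' * (N : ℝ) ^ 2 :=
    mul_nonneg (mul_nonneg (by positivity) hM'.le) (by positivity)
  refine ⟨12 * S ^ 2 * T * Λ * Ll + 3 * Λ ^ 2 * (4 * S ^ 2 + 2 * S * (T + 1) + (T + 1)),
    2 * α * M' * (N : ℝ) ^ 2, hC1, hC2, ?_⟩
  intro ΔX ΔY ΔT GX GY GT hΔX hΔY hΔT hGX hGY hGT hGXS hGYS hGTT _hA1 _hA2 _hA3 hΔ1 δ hδ _hgrid
  have hΔX1 : ΔX ≤ 1 := le_trans (le_max_left _ _) hΔ1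
  have hΔY1 : ΔY ≤ 1 := le_trans (le_trans (le_max_left _ _) (le_max_right _ _)) hΔ1
  have hΔT1 : ΔT ≤ 1 := le_trans (le_trans (le_max_right _ _) (le_max_right _ _)) hΔ1
  obtain ⟨D, hDdef⟩ : ∃ x : ℝ, x = Real.sqrt (ΔX ^ 2 + ΔY ^ 2 + ΔT ^ 2) := ⟨_, rfl⟩
  have hD2 : D ^ 2 = ΔX ^ 2 + ΔY ^ 2 + ΔT ^ 2 := by
    rw [hDdef]; exact Real.sq_sqrt (by positivity)
  have hD0 : 0 ≤ D := hDdef ▸ Real.sqrt_nonneg _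
  have hδn : ∀ n, ‖δ n‖ ≤ D / 2 := by
    intro n
    obtain ⟨h0, h1, h2⟩ := hδ n
    refine norm3_le (δ n) h0 h1 h2 (by positivity) ?_
    nlinarith [hD2]
  -- uniform bound on intensity-type quantities
  have key_bd : ∀ (w : Fin N → EuclideanSpace ℝ (Fin 3)) (p : EuclideanSpace ℝ (Fin 3)),
      |μ + α * ∑ m, g (p - w m)| ≤ Λ := by
    intro w p
    have hs : |∑ m, g (p - w m)| ≤ (N : ℝ) * B := by
      calc |∑ m, g (p - w m)| ≤ ∑ m, |g (p - w m)| := Finset.abs_sum_le_sum_abs _ _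
        _ ≤ ∑ _m : Fin N, B := Finset.sum_le_sum (fun m _ => hgbdd _)
        _ = (N : ℝ) * B := by simp [mul_comm]
    have hs' := abs_le.mp hs
    have h1 : α * (∑ m, g (p - w m)) ≤ α * ((N : ℝ) * B) :=
      mul_le_mul_of_nonneg_left hs'.2 hα
    have h2 : α * (-((N : ℝ) * B)) ≤ α * (∑ m, g (p - w m)) :=
      mul_le_mul_of_nonneg_left hs'.1 hα
    rw [hΛdef, abs_le]
    constructor <;> linarith [h1, h2, hμ]
  -- Lipschitz-type difference bound
  have key_diff : ∀ (w w' : Fin N → EuclideanSpace ℝ (Fin 3))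
      (p q : EuclideanSpace ℝ (Fin 3)) (r : ℝ), 0 ≤ r →
      (∀ m, ‖(p - w m) - (q - w' m)‖ ≤ r) →
      |(μ + α * ∑ m, g (p - w m)) - (μ + α * ∑ m, g (q - w' m))| ≤ Ll * r := by
    intro w w' p q r hr hm
    have heq : (μ + α * ∑ m, g (p - w m)) - (μ + α * ∑ m, g (q - w' m)) =
        α * ∑ m, (g (p - w m) - g (q - w' m)) := by
      rw [Finset.sum_sub_distrib]; ring
    rw [heq, abs_mul, abs_of_nonneg hα]
    have hsum : |∑ m, (g (p - w m) - g (q - w' m))| ≤ (N : ℝ) * (Lg * r) := by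
      calc |∑ m, (g (p - w m) - g (q - w' m))|
          ≤ ∑ m, |g (p - w m) - g (q - w' m)| := Finset.abs_sum_le_sum_abs _ _
        _ ≤ ∑ _m : Fin N, Lg * r := Finset.sum_le_sum (fun m _ =>
            le_trans (hglip _ _) (mul_le_mul_of_nonneg_left (hm m) hLg0))
        _ = (N : ℝ) * (Lg * r) := by simp [mul_comm]
    calc α * |∑ m, (g (p - w m) - g (q - w' m))| ≤ α * ((N : ℝ) * (Lg * r)) :=
        mul_le_mul_of_nonneg_left hsum hα
      _ = Ll * r := by rw [hLldef]; ring
  -- Part 2 : the data-fidelity term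
  have H2 : -2 * ∑ n, (μ + α * ∑ m, g ((u n + δ n) - (u m + δ m))) ≤
      -2 * ∑ n, (μ + α * ∑ m, g (u n - u m)) +
      2 * α * ∑ n, ∑ m, ⟪δ m - δ n, gradient g (u n - u m)⟫ +
      (2 * α * M' * (N : ℝ) ^ 2) * (ΔX ^ 2 + ΔY ^ 2 + ΔT ^ 2) := by
    have claim : ∀ n m : Fin N, -2 * (α * g ((u n + δ n) - (u m + δ m))) ≤
        -2 * (α * g (u n - u m)) + 2 * α * ⟪δ m - δ n, gradient g (u n - u m)⟫ +
        2 * α * M' * (ΔX ^ 2 + ΔY ^ 2 + ΔT ^ 2) := by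
      intro n m
      have ht := taylor_bound' g hg M' hM'.le hlip' (u n - u m) (δ n - δ m)
      have heq : (u n - u m) + (δ n - δ m) = (u n + δ n) - (u m + δ m) := by abel
      rw [heq] at ht
      have hnn : ‖δ n - δ m‖ ^ 2 ≤ ΔX ^ 2 + ΔY ^ 2 + ΔT ^ 2 := by
        have h1 : ‖δ n - δ m‖ ≤ D := by
          calc ‖δ n - δ m‖ ≤ ‖δ n‖ + ‖δ m‖ := norm_sub_le _ _
            _ ≤ D / 2 + D / 2 := add_le_add (hδn n) (hδn m)
            _ = D := by ring
        calc ‖δ n - δ m‖ ^ 2 ≤ D ^ 2 := by nlinarith [norm_nonneg (δ n - δ m)]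
          _ = _ := hD2
      have hinner : ⟪δ m - δ n, gradient g (u n - u m)⟫ =
          -⟪gradient g (u n - u m), δ n - δ m⟫ := by
        rw [real_inner_comm, show δ m - δ n = -(δ n - δ m) by abel, inner_neg_right]
      have habs := (abs_le.mp ht).1
      have hM2 : M' * ‖δ n - δ m‖ ^ 2 ≤ M' * (ΔX ^ 2 + ΔY ^ 2 + ΔT ^ 2) :=
        mul_le_mul_of_nonneg_left hnn hM'.le
      have hsc : -(g ((u n + δ n) - (u m + δ m))) ≤ -(g (u n - u m)) +
          ⟪δ m - δ n, gradient g (u n - u m)⟫ + M' * (ΔX ^ 2 + ΔY ^ 2 + ΔT ^ 2) := by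
        rw [hinner]; linarith
      have hf := mul_le_mul_of_nonneg_left hsc (by positivity : (0:ℝ) ≤ 2 * α)
      linarith [hf]
    have Hsum : ∑ n, ∑ m, (-2 * (α * g ((u n + δ n) - (u m + δ m)))) ≤
        ∑ n, ∑ m, (-2 * (α * g (u n - u m)) + 2 * α * ⟪δ m - δ n, gradient g (u n - u m)⟫ +
          2 * α * M' * (ΔX ^ 2 + ΔY ^ 2 + ΔT ^ 2)) :=
      Finset.sum_le_sum fun n _ => Finset.sum_le_sum fun m _ => claim n m
    have lhs_new := sum_shape N μ α (fun n m => g ((u n + δ n) - (u m + δ m)))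
    have lhs_old := sum_shape N μ α (fun n m => g (u n - u m))
    have rhs_split : ∑ n, ∑ m, (-2 * (α * g (u n - u m)) +
          2 * α * ⟪δ m - δ n, gradient g (u n - u m)⟫ +
          2 * α * M' * (ΔX ^ 2 + ΔY ^ 2 + ΔT ^ 2)) =
        (∑ n, ∑ m, (-2 * (α * g (u n - u m)))) +
        2 * α * (∑ n, ∑ m, ⟪δ m - δ n, gradient g (u n - u m)⟫) +
        (N : ℝ) ^ 2 * (2 * α * M' * (ΔX ^ 2 + ΔY ^ 2 + ΔT ^ 2)) := by
      simp only [Finset.sum_add_distrib, Finset.mul_sum, Finset.sum_const,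
        Finset.card_univ, Fintype.card_fin, nsmul_eq_mul]
      push_cast
      ring
    linarith [Hsum, lhs_new, lhs_old, rhs_split]
  have hLl0' : 0 ≤ Ll := hLl0
  have hΔXD : ΔX ≤ D := by
    rw [hDdef]
    calc ΔX = Real.sqrt (ΔX ^ 2) := (Real.sqrt_sq hΔX.le).symm
      _ ≤ Real.sqrt (ΔX ^ 2 + ΔY ^ 2 + ΔT ^ 2) :=
          Real.sqrt_le_sqrt (by nlinarith [sq_nonneg ΔY, sq_nonneg ΔT])
  have hΔYD : ΔY ≤ D := by
    rw [hDdef]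
    calc ΔY = Real.sqrt (ΔY ^ 2) := (Real.sqrt_sq hΔY.le).symm
      _ ≤ Real.sqrt (ΔX ^ 2 + ΔY ^ 2 + ΔT ^ 2) :=
          Real.sqrt_le_sqrt (by nlinarith [sq_nonneg ΔX, sq_nonneg ΔT])
  have hΔTD : ΔT ≤ D := by
    rw [hDdef]
    calc ΔT = Real.sqrt (ΔT ^ 2) := (Real.sqrt_sq hΔT.le).symm
      _ ≤ Real.sqrt (ΔX ^ 2 + ΔY ^ 2 + ΔT ^ 2) :=
          Real.sqrt_le_sqrt (by nlinarith [sq_nonneg ΔX, sq_nonneg ΔY])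
  have H1 : ΔX * ΔY * ΔT *
      (∑ vx ∈ Finset.range (GX + 1), ∑ vy ∈ Finset.range (GY + 1),
        ∑ vt ∈ Finset.range (GT + 1),
        (μ + α * ∑ m, g ((EuclideanSpace.equiv (Fin 3) ℝ).symm
          ![-S + (vx : ℝ) * ΔX, -S + (vy : ℝ) * ΔY, (vt : ℝ) * ΔT] -
          (u m + δ m))) ^ 2) ≤
      (∫ p in {p : EuclideanSpace ℝ (Fin 3) |
          p 0 ∈ Set.Icc (-S) S ∧ p 1 ∈ Set.Icc (-S) S ∧ p 2 ∈ Set.Icc (0 : ℝ) T},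
          (μ + α * ∑ m, g (p - u m)) ^ 2) +
      (12 * S ^ 2 * T * Λ * Ll + 3 * Λ ^ 2 * (4 * S ^ 2 + 2 * S * (T + 1) + (T + 1))) * D := by
    -- the box
    have hproj : ∀ i : Fin 3, Continuous fun p : EuclideanSpace ℝ (Fin 3) => p i := by
      intro i
      exact (EuclideanSpace.proj i : EuclideanSpace ℝ (Fin 3) →L[ℝ] ℝ).continuous
    have hboxclosed : IsClosed {p : EuclideanSpace ℝ (Fin 3) |
        p 0 ∈ Set.Icc (-S) S ∧ p 1 ∈ Set.Icc (-S) S ∧ p 2 ∈ Set.Icc (0 : ℝ) T} := by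
      have heq : {p : EuclideanSpace ℝ (Fin 3) |
          p 0 ∈ Set.Icc (-S) S ∧ p 1 ∈ Set.Icc (-S) S ∧ p 2 ∈ Set.Icc (0 : ℝ) T} =
          ((fun p : EuclideanSpace ℝ (Fin 3) => p 0) ⁻¹' Set.Icc (-S) S) ∩
          (((fun p : EuclideanSpace ℝ (Fin 3) => p 1) ⁻¹' Set.Icc (-S) S) ∩
           ((fun p : EuclideanSpace ℝ (Fin 3) => p 2) ⁻¹' Set.Icc (0 : ℝ) T)) := rfl
      rw [heq]
      exact (isClosed_Icc.preimage (hproj 0)).inter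
        ((isClosed_Icc.preimage (hproj 1)).inter (isClosed_Icc.preimage (hproj 2)))
    have hboxbdd : Bornology.IsBounded {p : EuclideanSpace ℝ (Fin 3) |
        p 0 ∈ Set.Icc (-S) S ∧ p 1 ∈ Set.Icc (-S) S ∧ p 2 ∈ Set.Icc (0 : ℝ) T} := by
      apply (Metric.isBounded_closedBall (x := (0 : EuclideanSpace ℝ (Fin 3)))
        (r := Real.sqrt (S ^ 2 + S ^ 2 + T ^ 2))).subset
      rintro p ⟨hp0, hp1, hp2⟩
      rw [Metric.mem_closedBall, dist_zero_right]
      refine norm3_le p (abs_le.mpr ⟨hp0.1, hp0.2⟩) (abs_le.mpr ⟨hp1.1, hp1.2⟩)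
        (abs_le.mpr ⟨by linarith [hp2.1], hp2.2⟩) (Real.sqrt_nonneg _) ?_
      rw [Real.sq_sqrt (by positivity)]
    have hboxcompact : IsCompact {p : EuclideanSpace ℝ (Fin 3) |
        p 0 ∈ Set.Icc (-S) S ∧ p 1 ∈ Set.Icc (-S) S ∧ p 2 ∈ Set.Icc (0 : ℝ) T} :=
      Metric.isCompact_of_isClosed_isBounded hboxclosed hboxbdd
    have hboxfin : volume {p : EuclideanSpace ℝ (Fin 3) |
        p 0 ∈ Set.Icc (-S) S ∧ p 1 ∈ Set.Icc (-S) S ∧ p 2 ∈ Set.Icc (0 : ℝ) T} < ⊤ :=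
      hboxcompact.measure_lt_top
    have hlamcont : Continuous fun p : EuclideanSpace ℝ (Fin 3) =>
        (μ + α * ∑ m, g (p - u m)) ^ 2 := by
      apply Continuous.pow
      exact continuous_const.add (continuous_const.mul (continuous_finset_sum _
        fun m _ => hg.continuous.comp (continuous_id.sub continuous_const)))
    have hInt : IntegrableOn (fun p : EuclideanSpace ℝ (Fin 3) =>
        (μ + α * ∑ m, g (p - u m)) ^ 2) {p : EuclideanSpace ℝ (Fin 3) |
        p 0 ∈ Set.Icc (-S) S ∧ p 1 ∈ Set.Icc (-S) S ∧ p 2 ∈ Set.Icc (0 : ℝ) T} volume :=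
      hlamcont.continuousOn.integrableOn_compact hboxcompact
    -- the cells
    set cell : ℕ × ℕ × ℕ → Set (EuclideanSpace ℝ (Fin 3)) := fun v =>
      {p : EuclideanSpace ℝ (Fin 3) |
        p 0 ∈ Set.Ico (-S + (v.1 : ℝ) * ΔX) (-S + (v.1 : ℝ) * ΔX + ΔX) ∧
        p 1 ∈ Set.Ico (-S + (v.2.1 : ℝ) * ΔY) (-S + (v.2.1 : ℝ) * ΔY + ΔY) ∧
        p 2 ∈ Set.Ico ((v.2.2 : ℝ) * ΔT) ((v.2.2 : ℝ) * ΔT + ΔT)} with hcelldef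
    have hcellm : ∀ v, MeasurableSet (cell v) := fun v => cell_measurable _ _ _ _ _ _
    have hcellvol : ∀ v, (volume (cell v)).toReal = ΔX * ΔY * ΔT := by
      intro v
      rw [hcelldef]
      rw [cell_volume (-S + (v.1 : ℝ) * ΔX) (-S + (v.2.1 : ℝ) * ΔY) ((v.2.2 : ℝ) * ΔT) ΔX ΔY ΔT]
      rw [ENNReal.toReal_mul, ENNReal.toReal_mul, ENNReal.toReal_ofReal hΔX.le,
        ENNReal.toReal_ofReal hΔY.le, ENNReal.toReal_ofReal hΔT.le]
    set Bf : Finset (ℕ × ℕ × ℕ) :=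
      Finset.range GX ×ˢ (Finset.range GY ×ˢ Finset.range GT) with hBfdef
    set Af : Finset (ℕ × ℕ × ℕ) :=
      Finset.range (GX + 1) ×ˢ (Finset.range (GY + 1) ×ˢ Finset.range (GT + 1)) with hAfdef
    have hBA : Bf ⊆ Af := by
      rw [hBfdef, hAfdef]
      exact Finset.product_subset_product (Finset.range_subset_range.mpr (Nat.le_succ _))
        (Finset.product_subset_product (Finset.range_subset_range.mpr (Nat.le_succ _))
          (Finset.range_subset_range.mpr (Nat.le_succ _)))
    have hmemB : ∀ v ∈ Bf, v.1 < GX ∧ v.2.1 < GY ∧ v.2.2 < GT := by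
      intro v hv
      rw [hBfdef, Finset.mem_product] at hv
      obtain ⟨h1, h2⟩ := hv
      rw [Finset.mem_product] at h2
      exact ⟨Finset.mem_range.mp h1, Finset.mem_range.mp h2.1, Finset.mem_range.mp h2.2⟩
    have hsubcell : ∀ v ∈ Bf, cell v ⊆ {p : EuclideanSpace ℝ (Fin 3) |
        p 0 ∈ Set.Icc (-S) S ∧ p 1 ∈ Set.Icc (-S) S ∧ p 2 ∈ Set.Icc (0 : ℝ) T} := by
      intro v hv p hp
      obtain ⟨hv1, hv2, hv3⟩ := hmemB v hv
      obtain ⟨hp0, hp1, hp2⟩ := hp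
      have c1 : ((v.1 : ℝ) + 1) ≤ (GX : ℝ) := by exact_mod_cast Nat.succ_le_of_lt hv1
      have c2 : ((v.2.1 : ℝ) + 1) ≤ (GY : ℝ) := by exact_mod_cast Nat.succ_le_of_lt hv2
      have c3 : ((v.2.2 : ℝ) + 1) ≤ (GT : ℝ) := by exact_mod_cast Nat.succ_le_of_lt hv3
      have n1 : (0 : ℝ) ≤ (v.1 : ℝ) * ΔX := by positivity
      have n2 : (0 : ℝ) ≤ (v.2.1 : ℝ) * ΔY := by positivity
      have n3 : (0 : ℝ) ≤ (v.2.2 : ℝ) * ΔT := by positivity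
      refine ⟨⟨by linarith [hp0.1], ?_⟩, ⟨by linarith [hp1.1], ?_⟩, ⟨by linarith [hp2.1], ?_⟩⟩
      · exact arith_upper hv1 hΔX hGXS hp0.2
      · exact arith_upper hv2 hΔY hGYS hp1.2
      · exact arith_upperT hv3 hΔT hGTT hp2.2
    -- pairwise disjointness of the cells
    have hpairwise : Set.Pairwise ↑Bf (Function.onFun Disjoint cell) := by
      intro v _ w _ hvw
      have hcase : v.1 ≠ w.1 ∨ v.2.1 ≠ w.2.1 ∨ v.2.2 ≠ w.2.2 := by
        by_contra hc
        push_neg at hc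
        exact hvw (Prod.ext hc.1 (Prod.ext hc.2.1 hc.2.2))
      have : Disjoint (cell v) (cell w) := by
        rcases hcase with h | h | h
        · have hd := Ico_step_disjoint (e := -S) hΔX h
          exact Set.disjoint_left.mpr fun p hp hq =>
            (Set.disjoint_left.mp hd) hp.1 hq.1
        · have hd := Ico_step_disjoint (e := -S) hΔY h
          exact Set.disjoint_left.mpr fun p hp hq =>
            (Set.disjoint_left.mp hd) hp.2.1 hq.2.1
        · have hd := Ico_step_disjoint (e := 0) hΔT h
          simp only [zero_add] at hd
          exact Set.disjoint_left.mpr fun p hp hq =>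
            (Set.disjoint_left.mp hd) hp.2.2 hq.2.2
      exact this
    -- per-cell estimate
    have hcell : ∀ v ∈ Bf, ΔX * ΔY * ΔT *
        (μ + α * ∑ m, g ((EuclideanSpace.equiv (Fin 3) ℝ).symm
          ![-S + (v.1 : ℝ) * ΔX, -S + (v.2.1 : ℝ) * ΔY, (v.2.2 : ℝ) * ΔT] -
          (u m + δ m))) ^ 2 ≤
        (∫ p in cell v, (μ + α * ∑ m, g (p - u m)) ^ 2) +
        ΔX * ΔY * ΔT * (2 * Λ * (Ll * (D / 2) + Ll * D)) := by
      intro v hv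
      have hfin : volume (cell v) < ⊤ :=
        lt_of_le_of_lt (measure_mono (hsubcell v hv)) hboxfin
      have hIcell : IntegrableOn (fun p : EuclideanSpace ℝ (Fin 3) =>
          (μ + α * ∑ m, g (p - u m)) ^ 2) (cell v) volume :=
        hInt.mono_set (hsubcell v hv)
      set Pv : EuclideanSpace ℝ (Fin 3) := (EuclideanSpace.equiv (Fin 3) ℝ).symm
        ![-S + (v.1 : ℝ) * ΔX, -S + (v.2.1 : ℝ) * ΔY, (v.2.2 : ℝ) * ΔT] with hPvdef
      have hpointwise : ∀ p ∈ cell v,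
          (μ + α * ∑ m, g (Pv - (u m + δ m))) ^ 2 ≤
          (μ + α * ∑ m, g (p - u m)) ^ 2 + 2 * Λ * (Ll * (D / 2) + Ll * D) := by
        intro p hp
        have hPvp : ‖Pv - p‖ ≤ D := by
          have hc0 : (Pv - p) 0 = (-S + (v.1 : ℝ) * ΔX) - p 0 := rfl
          have hc1 : (Pv - p) 1 = (-S + (v.2.1 : ℝ) * ΔY) - p 1 := rfl
          have hc2 : (Pv - p) 2 = ((v.2.2 : ℝ) * ΔT) - p 2 := rfl
          refine norm3_le (Pv - p) (a := ΔX) (b := ΔY) (c := ΔT) ?_ ?_ ?_ hD0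
            (le_of_eq hD2.symm)
          · rw [hc0]; exact abs_le.mpr ⟨by linarith [hp.1.2], by linarith [hp.1.1]⟩
          · rw [hc1]; exact abs_le.mpr ⟨by linarith [hp.2.1.2], by linarith [hp.2.1.1]⟩
          · rw [hc2]; exact abs_le.mpr ⟨by linarith [hp.2.2.2], by linarith [hp.2.2.1]⟩
        have A1 : |(μ + α * ∑ m, g (Pv - (u m + δ m))) -
            (μ + α * ∑ m, g (Pv - u m))| ≤ Ll * (D / 2) := by
          refine key_diff (fun m => u m + δ m) u Pv Pv (D / 2) (by positivity) ?_
          intro m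
          have e : (Pv - (u m + δ m)) - (Pv - u m) = -(δ m) := by abel
          rw [e, norm_neg]
          exact hδn m
        have A2 : |(μ + α * ∑ m, g (Pv - u m)) - (μ + α * ∑ m, g (p - u m))| ≤ Ll * D := by
          refine le_trans (key_diff u u Pv p ‖Pv - p‖ (norm_nonneg _) ?_) ?_
          · intro m
            have e : (Pv - u m) - (p - u m) = Pv - p := by abel
            rw [e]
          · exact mul_le_mul_of_nonneg_left hPvp hLl0
        have habs : |(μ + α * ∑ m, g (Pv - (u m + δ m))) -
            (μ + α * ∑ m, g (p - u m))| ≤ Ll * (D / 2) + Ll * D :=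
          le_trans (abs_sub_le _ (μ + α * ∑ m, g (Pv - u m)) _) (add_le_add A1 A2)
        exact aux_sq_le habs (key_bd (fun m => u m + δ m) Pv) (key_bd u p)
      have hconst1 : IntegrableOn (fun _ : EuclideanSpace ℝ (Fin 3) =>
          (μ + α * ∑ m, g (Pv - (u m + δ m))) ^ 2) (cell v) volume :=
        integrableOn_const hfin.ne
      have hconst2 : IntegrableOn (fun _ : EuclideanSpace ℝ (Fin 3) =>
          2 * Λ * (Ll * (D / 2) + Ll * D)) (cell v) volume :=
        integrableOn_const hfin.ne
      calc ΔX * ΔY * ΔT * (μ + α * ∑ m, g (Pv - (u m + δ m))) ^ 2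
          = (volume (cell v)).toReal • (μ + α * ∑ m, g (Pv - (u m + δ m))) ^ 2 := by
            rw [hcellvol v, smul_eq_mul]
        _ = ∫ _p in cell v, (μ + α * ∑ m, g (Pv - (u m + δ m))) ^ 2 :=
            (setIntegral_const _).symm
        _ ≤ ∫ p in cell v, ((μ + α * ∑ m, g (p - u m)) ^ 2 +
              2 * Λ * (Ll * (D / 2) + Ll * D)) := by
            refine setIntegral_mono_on hconst1 (hIcell.add hconst2) (hcellm v) hpointwise
        _ = (∫ p in cell v, (μ + α * ∑ m, g (p - u m)) ^ 2) +
              ΔX * ΔY * ΔT * (2 * Λ * (Ll * (D / 2) + Ll * D)) := by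
            rw [integral_add hIcell hconst2, setIntegral_const, measureReal_def, hcellvol v, smul_eq_mul]
    -- summing the per-cell estimates
    have hBsum : ∑ v ∈ Bf, (ΔX * ΔY * ΔT *
        (μ + α * ∑ m, g ((EuclideanSpace.equiv (Fin 3) ℝ).symm
          ![-S + (v.1 : ℝ) * ΔX, -S + (v.2.1 : ℝ) * ΔY, (v.2.2 : ℝ) * ΔT] -
          (u m + δ m))) ^ 2) ≤
        (∫ p in {p : EuclideanSpace ℝ (Fin 3) |
          p 0 ∈ Set.Icc (-S) S ∧ p 1 ∈ Set.Icc (-S) S ∧ p 2 ∈ Set.Icc (0 : ℝ) T},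
          (μ + α * ∑ m, g (p - u m)) ^ 2) + 12 * S ^ 2 * T * Λ * Ll * D := by
      have step1 : ∑ v ∈ Bf, (ΔX * ΔY * ΔT *
          (μ + α * ∑ m, g ((EuclideanSpace.equiv (Fin 3) ℝ).symm
            ![-S + (v.1 : ℝ) * ΔX, -S + (v.2.1 : ℝ) * ΔY, (v.2.2 : ℝ) * ΔT] -
            (u m + δ m))) ^ 2) ≤
          ∑ v ∈ Bf, ((∫ p in cell v, (μ + α * ∑ m, g (p - u m)) ^ 2) +
            ΔX * ΔY * ΔT * (2 * Λ * (Ll * (D / 2) + Ll * D))) :=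
        Finset.sum_le_sum hcell
      have step2 : ∑ v ∈ Bf, ((∫ p in cell v, (μ + α * ∑ m, g (p - u m)) ^ 2) +
            ΔX * ΔY * ΔT * (2 * Λ * (Ll * (D / 2) + Ll * D))) =
          (∑ v ∈ Bf, ∫ p in cell v, (μ + α * ∑ m, g (p - u m)) ^ 2) +
          (Bf.card : ℝ) * (ΔX * ΔY * ΔT * (2 * Λ * (Ll * (D / 2) + Ll * D))) := by
        rw [Finset.sum_add_distrib, Finset.sum_const, nsmul_eq_mul]
      have step3 : (∑ v ∈ Bf, ∫ p in cell v, (μ + α * ∑ m, g (p - u m)) ^ 2) ≤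
          ∫ p in {p : EuclideanSpace ℝ (Fin 3) |
            p 0 ∈ Set.Icc (-S) S ∧ p 1 ∈ Set.Icc (-S) S ∧ p 2 ∈ Set.Icc (0 : ℝ) T},
            (μ + α * ∑ m, g (p - u m)) ^ 2 := by
        rw [← integral_biUnion_finset Bf (fun v _ => hcellm v) hpairwise
          (fun v hv => hInt.mono_set (hsubcell v hv))]
        refine setIntegral_mono_set hInt
          (Filter.Eventually.of_forall fun p => sq_nonneg _)
          (HasSubset.Subset.eventuallyLE (Set.iUnion₂_subset hsubcell))
      have step4 : (Bf.card : ℝ) * (ΔX * ΔY * ΔT * (2 * Λ * (Ll * (D / 2) + Ll * D))) =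
          12 * S ^ 2 * T * Λ * Ll * D := by
        have hcard : (Bf.card : ℝ) = (GX : ℝ) * ((GY : ℝ) * (GT : ℝ)) := by
          rw [hBfdef, Finset.card_product, Finset.card_product]
          push_cast [Finset.card_range]
          ring
        have hgx : (GX : ℝ) = 2 * S / ΔX := by
          rw [eq_div_iff (ne_of_gt hΔX)]; exact hGXS
        have hgy : (GY : ℝ) = 2 * S / ΔY := by
          rw [eq_div_iff (ne_of_gt hΔY)]; exact hGYS
        have hgt : (GT : ℝ) = T / ΔT := by
          rw [eq_div_iff (ne_of_gt hΔT)]; exact hGTT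
        rw [hcard, hgx, hgy, hgt]
        field_simp
        ring
      calc ∑ v ∈ Bf, (ΔX * ΔY * ΔT *
          (μ + α * ∑ m, g ((EuclideanSpace.equiv (Fin 3) ℝ).symm
            ![-S + (v.1 : ℝ) * ΔX, -S + (v.2.1 : ℝ) * ΔY, (v.2.2 : ℝ) * ΔT] -
            (u m + δ m))) ^ 2)
          ≤ ∑ v ∈ Bf, ((∫ p in cell v, (μ + α * ∑ m, g (p - u m)) ^ 2) +
              ΔX * ΔY * ΔT * (2 * Λ * (Ll * (D / 2) + Ll * D))) := step1
        _ = (∑ v ∈ Bf, ∫ p in cell v, (μ + α * ∑ m, g (p - u m)) ^ 2) +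
              (Bf.card : ℝ) * (ΔX * ΔY * ΔT * (2 * Λ * (Ll * (D / 2) + Ll * D))) := step2
        _ ≤ (∫ p in {p : EuclideanSpace ℝ (Fin 3) |
              p 0 ∈ Set.Icc (-S) S ∧ p 1 ∈ Set.Icc (-S) S ∧ p 2 ∈ Set.Icc (0 : ℝ) T},
              (μ + α * ∑ m, g (p - u m)) ^ 2) +
              (Bf.card : ℝ) * (ΔX * ΔY * ΔT * (2 * Λ * (Ll * (D / 2) + Ll * D))) := by
            exact add_le_add_left step3 _
        _ = _ := by rw [step4]
    -- the boundary layer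
    have hFbd : ∀ v ∈ Af \ Bf,
        (μ + α * ∑ m, g ((EuclideanSpace.equiv (Fin 3) ℝ).symm
          ![-S + (v.1 : ℝ) * ΔX, -S + (v.2.1 : ℝ) * ΔY, (v.2.2 : ℝ) * ΔT] -
          (u m + δ m))) ^ 2 ≤ Λ ^ 2 := by
      intro v _
      have h := key_bd (fun m => u m + δ m) ((EuclideanSpace.equiv (Fin 3) ℝ).symm
        ![-S + (v.1 : ℝ) * ΔX, -S + (v.2.1 : ℝ) * ΔY, (v.2.2 : ℝ) * ΔT])
      exact sq_le_of_abs_le h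
    have hbd1 : ΔX * ΔY * ΔT * ∑ v ∈ Af \ Bf,
        (μ + α * ∑ m, g ((EuclideanSpace.equiv (Fin 3) ℝ).symm
          ![-S + (v.1 : ℝ) * ΔX, -S + (v.2.1 : ℝ) * ΔY, (v.2.2 : ℝ) * ΔT] -
          (u m + δ m))) ^ 2 ≤
        3 * Λ ^ 2 * (4 * S ^ 2 + 2 * S * (T + 1) + (T + 1)) * D := by
      have hsum_le : ∑ v ∈ Af \ Bf,
          (μ + α * ∑ m, g ((EuclideanSpace.equiv (Fin 3) ℝ).symm
            ![-S + (v.1 : ℝ) * ΔX, -S + (v.2.1 : ℝ) * ΔY, (v.2.2 : ℝ) * ΔT] -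
            (u m + δ m))) ^ 2 ≤ ((Af \ Bf).card : ℝ) * Λ ^ 2 := by
        have := Finset.sum_le_card_nsmul (Af \ Bf) _ (Λ ^ 2) hFbd
        rwa [nsmul_eq_mul] at this
      have hcards : ((Af \ Bf).card : ℝ) =
          ((GX : ℝ) + 1) * (((GY : ℝ) + 1) * ((GT : ℝ) + 1)) - (GX : ℝ) * ((GY : ℝ) * (GT : ℝ)) := by
        rw [Finset.card_sdiff_of_subset hBA, hAfdef, hBfdef, Finset.card_product, Finset.card_product,
          Finset.card_product, Finset.card_product]
        have hle : Finset.range GX ×ˢ (Finset.range GY ×ˢ Finset.range GT) ⊆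
            Finset.range (GX+1) ×ˢ (Finset.range (GY+1) ×ˢ Finset.range (GT+1)) := hBA
        push_cast [Finset.card_range, Nat.cast_sub (Nat.mul_le_mul (Nat.le_succ _)
          (Nat.mul_le_mul (Nat.le_succ _) (Nat.le_succ _)))]
        ring
      have hgx : (GX : ℝ) = 2 * S / ΔX := by
        rw [eq_div_iff (ne_of_gt hΔX)]; exact hGXS
      have hgy : (GY : ℝ) = 2 * S / ΔY := by
        rw [eq_div_iff (ne_of_gt hΔY)]; exact hGYS
      have hgt : (GT : ℝ) = T / ΔT := by
        rw [eq_div_iff (ne_of_gt hΔT)]; exact hGTT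
      have hvol_eq : ΔX * ΔY * ΔT * ((Af \ Bf).card : ℝ) =
          (2 * S + ΔX) * (2 * S + ΔY) * (T + ΔT) - 2 * S * (2 * S) * T := by
        rw [hcards, hgx, hgy, hgt]
        field_simp
      have hvol_le := vol_diff_le hS hT hΔX hΔY hΔT hΔX1 hΔY1 hΔT1
      have hsum3 : ΔX + ΔY + ΔT ≤ 3 * D := by linarith
      calc ΔX * ΔY * ΔT * ∑ v ∈ Af \ Bf,
          (μ + α * ∑ m, g ((EuclideanSpace.equiv (Fin 3) ℝ).symm
            ![-S + (v.1 : ℝ) * ΔX, -S + (v.2.1 : ℝ) * ΔY, (v.2.2 : ℝ) * ΔT] -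
            (u m + δ m))) ^ 2
          ≤ ΔX * ΔY * ΔT * (((Af \ Bf).card : ℝ) * Λ ^ 2) := by
            exact mul_le_mul_of_nonneg_left hsum_le (by positivity)
        _ = (ΔX * ΔY * ΔT * ((Af \ Bf).card : ℝ)) * Λ ^ 2 := by ring
        _ ≤ ((4 * S ^ 2 + 2 * S * (T + 1) + (T + 1)) * (ΔX + ΔY + ΔT)) * Λ ^ 2 := by
            rw [hvol_eq]
            exact mul_le_mul_of_nonneg_right hvol_le (sq_nonneg Λ)
        _ ≤ ((4 * S ^ 2 + 2 * S * (T + 1) + (T + 1)) * (3 * D)) * Λ ^ 2 := by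
            have hK : (0:ℝ) ≤ 4 * S ^ 2 + 2 * S * (T + 1) + (T + 1) := by positivity
            exact mul_le_mul_of_nonneg_right
              (mul_le_mul_of_nonneg_left hsum3 hK) (sq_nonneg Λ)
        _ = 3 * Λ ^ 2 * (4 * S ^ 2 + 2 * S * (T + 1) + (T + 1)) * D := by ring
    -- putting the grid sum together
    have hnest : (∑ vx ∈ Finset.range (GX + 1), ∑ vy ∈ Finset.range (GY + 1),
        ∑ vt ∈ Finset.range (GT + 1),
        (μ + α * ∑ m, g ((EuclideanSpace.equiv (Fin 3) ℝ).symm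
          ![-S + (vx : ℝ) * ΔX, -S + (vy : ℝ) * ΔY, (vt : ℝ) * ΔT] -
          (u m + δ m))) ^ 2) = ∑ v ∈ Af,
        (μ + α * ∑ m, g ((EuclideanSpace.equiv (Fin 3) ℝ).symm
          ![-S + (v.1 : ℝ) * ΔX, -S + (v.2.1 : ℝ) * ΔY, (v.2.2 : ℝ) * ΔT] -
          (u m + δ m))) ^ 2 := by
      rw [hAfdef, Finset.sum_product]
      refine Finset.sum_congr rfl fun vx _ => ?_
      rw [Finset.sum_product]
    have hsplit : ∑ v ∈ Af,
        (μ + α * ∑ m, g ((EuclideanSpace.equiv (Fin 3) ℝ).symm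
          ![-S + (v.1 : ℝ) * ΔX, -S + (v.2.1 : ℝ) * ΔY, (v.2.2 : ℝ) * ΔT] -
          (u m + δ m))) ^ 2 =
        (∑ v ∈ Af \ Bf, (μ + α * ∑ m, g ((EuclideanSpace.equiv (Fin 3) ℝ).symm
          ![-S + (v.1 : ℝ) * ΔX, -S + (v.2.1 : ℝ) * ΔY, (v.2.2 : ℝ) * ΔT] -
          (u m + δ m))) ^ 2) +
        (∑ v ∈ Bf, (μ + α * ∑ m, g ((EuclideanSpace.equiv (Fin 3) ℝ).symm
          ![-S + (v.1 : ℝ) * ΔX, -S + (v.2.1 : ℝ) * ΔY, (v.2.2 : ℝ) * ΔT] -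
          (u m + δ m))) ^ 2) := (Finset.sum_sdiff hBA).symm
    rw [hnest, hsplit, mul_add]
    have hBsum' : ΔX * ΔY * ΔT * ∑ v ∈ Bf,
        (μ + α * ∑ m, g ((EuclideanSpace.equiv (Fin 3) ℝ).symm
          ![-S + (v.1 : ℝ) * ΔX, -S + (v.2.1 : ℝ) * ΔY, (v.2.2 : ℝ) * ΔT] -
          (u m + δ m))) ^ 2 ≤
        (∫ p in {p : EuclideanSpace ℝ (Fin 3) |
          p 0 ∈ Set.Icc (-S) S ∧ p 1 ∈ Set.Icc (-S) S ∧ p 2 ∈ Set.Icc (0 : ℝ) T},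
          (μ + α * ∑ m, g (p - u m)) ^ 2) + 12 * S ^ 2 * T * Λ * Ll * D := by
      rw [Finset.mul_sum]
      exact hBsum
    have hfinal := add_le_add hbd1 hBsum'
    linarith [hfinal]
  rw [show Real.sqrt (ΔX ^ 2 + ΔY ^ 2 + ΔT ^ 2) = D from hDdef.symm]
  linarith [H1, H2]

end Main
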